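/- The constant π/3 in the inequality |Ω| ≥ (π/3) r_in(Ω)² diam(Ω) for convex bodies in ℝ³ is sharp: for fixed r > 0, letting Ω_d be the interior of the convex hull of the ball B(0, r) and the points (0,0,±d/2), one has |Ω_d| / (r_in(Ω_d)² · diam(Ω_d)) → π/3 as d → ∞. -/

import Mathlib

open MeasureTheory Filter

/-- Inradius of a set `Ω ⊂ ℝ³`. -/
noncomputable def inradius (Ω : Set (EuclideanSpace ℝ (Fin 3))) : ℝ :=
  sSup {r : ℝ | 0 < r ∧ ∃ z, Metric.ball z r ⊆ Ω}

/-- The spindle-shaped convex body: interior of the convex hull of the closed ball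
of radius `r` centered at the origin and the two points `(0,0,±d/2)`. -/
noncomputable def spindle (r d : ℝ) : Set (EuclideanSpace ℝ (Fin 3)) :=
  interior (convexHull ℝ (Metric.closedBall 0 r ∪
    {EuclideanSpace.single 2 (d / 2), EuclideanSpace.single 2 (-(d / 2))}))

open Metric Set Real

local notation "E3" => EuclideanSpace ℝ (Fin 3)
local notation "E2" => EuclideanSpace ℝ (Fin 2)

lemma norm_E2 (v : E2) : ‖v‖ = Real.sqrt ((v 0)^2 + (v 1)^2) := by
  rw [EuclideanSpace.norm_eq]
  simp [Fin.sum_univ_two, Real.norm_eq_abs, sq_abs]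

lemma volume_slice (F : ℝ → ℝ → Prop) (hm : MeasurableSet {q : ℝ × ℝ | F q.1 q.2}) :
    volume {x : E3 | F (Real.sqrt ((x 0)^2 + (x 1)^2)) (x 2)}
      = ∫⁻ z : ℝ, volume {v : E2 | F ‖v‖ z} := by
  have hg3 : Measurable (fun x : Fin 3 → ℝ => (Real.sqrt ((x 0)^2 + (x 1)^2), x 2)) := by
    fun_prop
  have hS' : MeasurableSet {x : Fin 3 → ℝ | F (Real.sqrt ((x 0)^2 + (x 1)^2)) (x 2)} :=
    hm.preimage hg3
  have step1 : volume {x : E3 | F (Real.sqrt ((x 0)^2 + (x 1)^2)) (x 2)}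
      = volume {x : Fin 3 → ℝ | F (Real.sqrt ((x 0)^2 + (x 1)^2)) (x 2)} := by
    exact (EuclideanSpace.volume_preserving_symm_measurableEquiv_toLp (Fin 3)).measure_preimage
      hS'.nullMeasurableSet
  -- split off last coordinate
  have hA : MeasurableSet {p : ℝ × (Fin 2 → ℝ) | F (Real.sqrt ((p.2 0)^2 + (p.2 1)^2)) p.1} := by
    have hg : Measurable (fun p : ℝ × (Fin 2 → ℝ) => (Real.sqrt ((p.2 0)^2 + (p.2 1)^2), p.1)) := by
      fun_prop
    exact hm.preimage hg
  have step2 : volume {x : Fin 3 → ℝ | F (Real.sqrt ((x 0)^2 + (x 1)^2)) (x 2)}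
      = ((volume : Measure ℝ).prod (Measure.pi fun _ : Fin 2 => (volume : Measure ℝ)))
          {p : ℝ × (Fin 2 → ℝ) | F (Real.sqrt ((p.2 0)^2 + (p.2 1)^2)) p.1} := by
    rw [(volume_pi : (volume : Measure (Fin 3 → ℝ)) = _)]
    exact (measurePreserving_piFinSuccAbove (fun _ : Fin 3 => (volume : Measure ℝ)) 2).measure_preimage
      hA.nullMeasurableSet
  rw [step1, step2, Measure.prod_apply hA]
  refine lintegral_congr fun z => ?_
  have : (Prod.mk z ⁻¹' {p : ℝ × (Fin 2 → ℝ) | F (Real.sqrt ((p.2 0)^2 + (p.2 1)^2)) p.1})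
      = {y : Fin 2 → ℝ | F (Real.sqrt ((y 0)^2 + (y 1)^2)) z} := rfl
  rw [this, ← (volume_pi : (volume : Measure (Fin 2 → ℝ)) = _)]
  have hB : MeasurableSet {y : Fin 2 → ℝ | F (Real.sqrt ((y 0)^2 + (y 1)^2)) z} := by
    have hg : Measurable (fun y : Fin 2 → ℝ => (Real.sqrt ((y 0)^2 + (y 1)^2), z)) := by fun_prop
    exact hm.preimage hg
  have := (EuclideanSpace.volume_preserving_symm_measurableEquiv_toLp (Fin 2)).measure_preimage
      hB.nullMeasurableSet
  rw [← this]
  congr 1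
  ext v
  simp only [Set.mem_preimage, Set.mem_setOf_eq, norm_E2]
  rfl

lemma volume_ball2 (ρ : ℝ) :
    volume (Metric.ball (0 : E2) ρ) = ENNReal.ofReal π * ENNReal.ofReal (max ρ 0) ^ 2 := by
  rw [EuclideanSpace.volume_ball]
  have h2 : (Fintype.card (Fin 2)) = 2 := by simp
  rw [h2]
  have : (Real.sqrt π ^ 2 / Real.Gamma ((2:ℕ) / 2 + 1)) = π := by
    rw [Real.sq_sqrt Real.pi_nonneg]
    norm_num [Real.Gamma_two]
  rw [this]
  have : ENNReal.ofReal ρ = ENNReal.ofReal (max ρ 0) := by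
    rcases le_total ρ 0 with h | h
    · rw [ENNReal.ofReal_of_nonpos h, max_eq_right h, ENNReal.ofReal_zero]
    · rw [max_eq_left h]
  rw [this, mul_comm]

lemma volume_closedBall2 (ρ : ℝ) :
    volume (Metric.closedBall (0 : E2) ρ) = ENNReal.ofReal π * ENNReal.ofReal (max ρ 0) ^ 2 := by
  rw [EuclideanSpace.volume_closedBall]
  have h2 : (Fintype.card (Fin 2)) = 2 := by simp
  rw [h2]
  have : (Real.sqrt π ^ 2 / Real.Gamma ((2:ℕ) / 2 + 1)) = π := by
    rw [Real.sq_sqrt Real.pi_nonneg]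
    norm_num [Real.Gamma_two]
  rw [this]
  have : ENNReal.ofReal ρ = ENNReal.ofReal (max ρ 0) := by
    rcases le_total ρ 0 with h | h
    · rw [ENNReal.ofReal_of_nonpos h, max_eq_right h, ENNReal.ofReal_zero]
    · rw [max_eq_left h]
  rw [this, mul_comm]

lemma cone_lintegral (c R : ℝ) (hc : 0 < c) (hR : 0 ≤ R) :
    ∫⁻ z : ℝ, (ENNReal.ofReal π * ENNReal.ofReal (max (R - c * |z|) 0) ^ 2)
      = ENNReal.ofReal (2 * π * R ^ 3 / (3 * c)) := by
  set g : ℝ → ℝ := fun t => π * (max (R - c * t) 0) ^ 2 with hg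
  have hgabs : ∀ z : ℝ, ENNReal.ofReal π * ENNReal.ofReal (max (R - c * |z|) 0) ^ 2
      = ENNReal.ofReal (g |z|) := by
    intro z
    rw [hg]
    rw [ENNReal.ofReal_mul Real.pi_nonneg, ENNReal.ofReal_pow (le_max_right _ _)]
  simp_rw [hgabs]
  have a_def : (0:ℝ) ≤ R / c := by positivity
  have hcont : Continuous fun z : ℝ => g |z| := by
    apply Continuous.mul continuous_const
    exact (((continuous_const.sub (continuous_const.mul continuous_abs)).max continuous_const).pow 2)
  have hsupp : HasCompactSupport fun z : ℝ => g |z| := by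
    refine HasCompactSupport.intro (isCompact_Icc (a := -(R/c)) (b := R/c)) ?_
    intro x hx
    have : R / c < |x| := by
      simp only [Set.mem_Icc, not_and_or, not_le] at hx
      rcases hx with h | h
      · rw [abs_of_neg (by nlinarith)] ; linarith
      · rw [abs_of_pos (by nlinarith)] ; linarith
    have : R - c * |x| < 0 := by
      have := (div_lt_iff₀ hc).mp this
      nlinarith
    simp [hg, max_eq_right this.le]
  have hint : Integrable fun z : ℝ => g |z| := hcont.integrable_of_hasCompactSupport hsupp
  rw [← ofReal_integral_eq_lintegral_ofReal hint
      (Eventually.of_forall fun z => by positivity)]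
  congr 1
  rw [integral_comp_abs (f := g)]
  -- ∫ t in Ioi 0, g t
  have hsplit : Ioc (0:ℝ) (R/c) ∪ Ioi (R/c) = Ioi 0 := Ioc_union_Ioi_eq_Ioi a_def
  have hgcont : Continuous g := by
    apply Continuous.mul continuous_const
    exact (((continuous_const.sub (continuous_const.mul continuous_id)).max continuous_const).pow 2)
  have hzero : ∀ t ∈ Ioi (R/c), g t = 0 := by
    intro t ht
    have : R - c * t < 0 := by
      have := (div_lt_iff₀ hc).mp (mem_Ioi.mp ht)
      nlinarith
    simp [hg, max_eq_right this.le]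
  have hI1 : IntegrableOn g (Ioc 0 (R/c)) := hgcont.integrableOn_Ioc
  have hI2 : IntegrableOn g (Ioi (R/c)) :=
    (integrableOn_congr_fun hzero measurableSet_Ioi).mpr (integrableOn_zero)
  rw [← hsplit, setIntegral_union (Ioc_disjoint_Ioi le_rfl) measurableSet_Ioi hI1 hI2]
  have h2 : ∫ t in Ioi (R/c), g t = 0 := by
    rw [setIntegral_congr_fun measurableSet_Ioi hzero]
    simp
  have h1 : ∫ t in Ioc 0 (R/c), g t = π * R^3 / (3*c) := by
    have heq : ∀ t ∈ Ioc (0:ℝ) (R/c), g t = π * (R - c*t)^2 := by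
      intro t ht
      have : 0 ≤ R - c * t := by
        have := (le_div_iff₀ hc).mp ht.2
        nlinarith
      simp [hg, max_eq_left this]
    rw [setIntegral_congr_fun measurableSet_Ioc heq, ← intervalIntegral.integral_of_le a_def]
    have hderiv : ∀ t ∈ Set.uIcc (0:ℝ) (R/c),
        HasDerivAt (fun t : ℝ => π * (-((R - c*t)^3) / (3*c))) (π * (R - c*t)^2) t := by
      intro t _
      have h0 : HasDerivAt (fun t : ℝ => R - c*t) (-(c*1)) t :=
        ((hasDerivAt_id t).const_mul c).const_sub R
      have h1 : HasDerivAt (fun t : ℝ => π * (-((R - c*t)^3) / (3*c))) _ t := ((h0.pow 3).neg.div_const (3*c)).const_mul π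
      convert h1 using 1
      field_simp
      ring
    rw [intervalIntegral.integral_eq_sub_of_hasDerivAt hderiv
      ((continuous_const.mul ((continuous_const.sub (continuous_const.mul continuous_id)).pow 2)).intervalIntegrable _ _)]
    have : R - c * (R/c) = 0 := by field_simp; ring
    rw [this]
    ring
  rw [h1, h2]
  ring

noncomputable def coneO (c R : ℝ) : Set E3 :=
  {x | Real.sqrt ((x 0)^2 + (x 1)^2) + c * |x 2| < R}

noncomputable def coneC (c R : ℝ) : Set E3 :=
  {x | Real.sqrt ((x 0)^2 + (x 1)^2) + c * |x 2| ≤ R}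

lemma volume_coneO (c R : ℝ) (hc : 0 < c) (hR : 0 ≤ R) :
    volume (coneO c R) = ENNReal.ofReal (2 * π * R ^ 3 / (3 * c)) := by
  have hm : MeasurableSet {q : ℝ × ℝ | q.1 + c * |q.2| < R} := by
    apply measurableSet_lt (by fun_prop) measurable_const
  have h := volume_slice (fun s z => s + c * |z| < R) hm
  simp only at h
  show volume {x : E3 | Real.sqrt ((x 0)^2 + (x 1)^2) + c * |x 2| < R} = _
  rw [h]
  have : ∀ z : ℝ, {v : E2 | ‖v‖ + c * |z| < R} = Metric.ball (0 : E2) (R - c * |z|) := by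
    intro z; ext v
    simp only [Set.mem_setOf_eq, mem_ball_zero_iff]
    constructor <;> intro h <;> linarith
  simp_rw [this, volume_ball2]
  exact cone_lintegral c R hc hR

lemma volume_coneC (c R : ℝ) (hc : 0 < c) (hR : 0 ≤ R) :
    volume (coneC c R) = ENNReal.ofReal (2 * π * R ^ 3 / (3 * c)) := by
  have hm : MeasurableSet {q : ℝ × ℝ | q.1 + c * |q.2| ≤ R} := by
    apply measurableSet_le (by fun_prop) measurable_const
  have h := volume_slice (fun s z => s + c * |z| ≤ R) hm
  simp only at h
  show volume {x : E3 | Real.sqrt ((x 0)^2 + (x 1)^2) + c * |x 2| ≤ R} = _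
  rw [h]
  have : ∀ z : ℝ, {v : E2 | ‖v‖ + c * |z| ≤ R} = Metric.closedBall (0 : E2) (R - c * |z|) := by
    intro z; ext v
    simp only [Set.mem_setOf_eq, mem_closedBall_zero_iff]
    constructor <;> intro h <;> linarith
  simp_rw [this, volume_closedBall2]
  exact cone_lintegral c R hc hR

-- triangle inequality for the planar norm
lemma sqrt_tri (a b x0 x1 y0 y1 : ℝ) (ha : 0 ≤ a) (hb : 0 ≤ b) :
    Real.sqrt ((a*x0 + b*y0)^2 + (a*x1 + b*y1)^2)
      ≤ a * Real.sqrt (x0^2 + x1^2) + b * Real.sqrt (y0^2 + y1^2) := by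
  set X := Real.sqrt (x0^2 + x1^2) with hX
  set Y := Real.sqrt (y0^2 + y1^2) with hY
  have hX0 : 0 ≤ X := Real.sqrt_nonneg _
  have hY0 : 0 ≤ Y := Real.sqrt_nonneg _
  have hXsq : X^2 = x0^2 + x1^2 := Real.sq_sqrt (by positivity)
  have hYsq : Y^2 = y0^2 + y1^2 := Real.sq_sqrt (by positivity)
  have hcs : x0*y0 + x1*y1 ≤ X * Y := by
    rcases le_total (x0*y0 + x1*y1) 0 with h | h
    · exact h.trans (by positivity)
    · nlinarith [sq_nonneg (x0*y1 - x1*y0), mul_nonneg hX0 hY0]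
  have key : (a*x0 + b*y0)^2 + (a*x1 + b*y1)^2 ≤ (a*X + b*Y)^2 := by
    have e1 : (a*x0 + b*y0)^2 + (a*x1 + b*y1)^2
        = a^2*(x0^2+x1^2) + b^2*(y0^2+y1^2) + 2*(a*b)*(x0*y0+x1*y1) := by ring
    have e2 : (a*X + b*Y)^2 = a^2*(X^2) + b^2*(Y^2) + 2*(a*b)*(X*Y) := by ring
    have h4 : 2*(a*b)*(x0*y0+x1*y1) ≤ 2*(a*b)*(X*Y) :=
      mul_le_mul_of_nonneg_left hcs (by positivity)
    rw [e1, e2, hXsq, hYsq]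
    linarith
  calc Real.sqrt ((a*x0 + b*y0)^2 + (a*x1 + b*y1)^2)
      ≤ Real.sqrt ((a*X + b*Y)^2) := Real.sqrt_le_sqrt key
    _ = a*X + b*Y := Real.sqrt_sq (by positivity)

lemma convex_coneC (c R : ℝ) (hc : 0 ≤ c) : Convex ℝ (coneC c R) := by
  intro x hx y hy a b ha hb hab
  simp only [coneC, Set.mem_setOf_eq] at hx hy ⊢
  have hcoord : ∀ i, (a • x + b • y) i = a * x i + b * y i := by
    intro i
    simp [PiLp.add_apply, PiLp.smul_apply, smul_eq_mul]
  rw [hcoord 0, hcoord 1, hcoord 2]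
  have h1 := sqrt_tri a b (x 0) (x 1) (y 0) (y 1) ha hb
  have h2 : |a * x 2 + b * y 2| ≤ a * |x 2| + b * |y 2| := by
    calc |a * x 2 + b * y 2| ≤ |a * x 2| + |b * y 2| := abs_add_le _ _
      _ = a * |x 2| + b * |y 2| := by rw [abs_mul, abs_mul, abs_of_nonneg ha, abs_of_nonneg hb]
  have h3 : c * |a * x 2 + b * y 2| ≤ c * (a * |x 2| + b * |y 2|) :=
    mul_le_mul_of_nonneg_left h2 hc
  have hR' : a*R + b*R = R := by rw [← add_mul, hab, one_mul]
  nlinarith [mul_le_mul_of_nonneg_left hx ha, mul_le_mul_of_nonneg_left hy hb]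

noncomputable def sHull (r d : ℝ) : Set E3 :=
  convexHull ℝ (Metric.closedBall 0 r ∪
    {EuclideanSpace.single 2 (d / 2), EuclideanSpace.single 2 (-(d / 2))})

lemma norm_E3 (x : E3) : ‖x‖ = Real.sqrt ((x 0)^2 + (x 1)^2 + (x 2)^2) := by
  rw [EuclideanSpace.norm_eq]
  simp [Fin.sum_univ_three, Real.norm_eq_abs, sq_abs]

lemma isOpen_coneO (c R : ℝ) : IsOpen (coneO c R) := by
  have h0 : Continuous fun x : E3 => x 0 := (EuclideanSpace.proj (0 : Fin 3)).continuous
  have h1 : Continuous fun x : E3 => x 1 := (EuclideanSpace.proj (1 : Fin 3)).continuous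
  have h2 : Continuous fun x : E3 => x 2 := (EuclideanSpace.proj (2 : Fin 3)).continuous
  exact isOpen_lt (by fun_prop) continuous_const

lemma coneO_subset_hull (r d : ℝ) (hr : 0 < r) (hd : 0 < d) :
    coneO (2*r/d) r ⊆ sHull r d := by
  intro x hx
  simp only [coneO, Set.mem_setOf_eq] at hx
  have hsq : 0 ≤ Real.sqrt ((x 0)^2 + (x 1)^2) := Real.sqrt_nonneg _
  set lam : ℝ := 1 - 2*|x 2|/d with hlam
  have h2' : 2*r*|x 2|/d < r := by
    have h2 : (2*r/d)*|x 2| < r := by linarith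
    rw [div_mul_eq_mul_div] at h2
    exact h2
  have h1 : 2*r*|x 2| < r*d := by
    have := (div_lt_iff₀ hd).mp h2'
    linarith
  have hx2 : |x 2| < d/2 := by nlinarith
  have hlam_pos : 0 < lam := by
    rw [hlam, sub_pos, div_lt_one hd]
    linarith
  have hlam_le : lam ≤ 1 := by
    rw [hlam]
    have : 0 ≤ 2*|x 2|/d := by positivity
    linarith
  set v : E3 := x - EuclideanSpace.single 2 (x 2) with hv
  have hv0 : v 0 = x 0 := by simp [hv, EuclideanSpace.single_apply]
  have hv1 : v 1 = x 1 := by simp [hv, EuclideanSpace.single_apply]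
  have hv2 : v 2 = 0 := by simp [hv, EuclideanSpace.single_apply]
  set b : E3 := lam⁻¹ • v with hb
  have hnb : ‖b‖ ≤ r := by
    rw [hb, norm_smul, norm_E3, hv0, hv1, hv2]
    have hs : Real.sqrt ((x 0)^2 + (x 1)^2 + 0^2) = Real.sqrt ((x 0)^2 + (x 1)^2) := by
      norm_num
    rw [hs, Real.norm_eq_abs, abs_of_pos (inv_pos.mpr hlam_pos)]
    have hkey : Real.sqrt ((x 0)^2 + (x 1)^2) ≤ r * lam := by
      rw [hlam]
      have : (2*r/d) * |x 2| = r * (2*|x 2|/d) := by ring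
      nlinarith
    calc lam⁻¹ * Real.sqrt ((x 0)^2 + (x 1)^2) ≤ lam⁻¹ * (r * lam) := by
          apply mul_le_mul_of_nonneg_left hkey (by positivity)
      _ = r := by field_simp
  set s : ℝ := if 0 ≤ x 2 then d/2 else -(d/2) with hs
  set p : E3 := EuclideanSpace.single 2 s with hp
  have hcombo : lam • b + (1 - lam) • p = x := by
    ext i
    have : lam • b = v := by
      rw [hb, smul_smul, mul_inv_cancel₀ hlam_pos.ne', one_smul]
    rw [PiLp.add_apply, this, PiLp.smul_apply, smul_eq_mul]
    have hp0 : p 0 = 0 := by simp [hp, EuclideanSpace.single_apply]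
    have hp1 : p 1 = 0 := by simp [hp, EuclideanSpace.single_apply]
    have hp2 : p 2 = s := by simp [hp, EuclideanSpace.single_apply]
    fin_cases i
    · show v 0 + (1 - lam) * p 0 = x 0
      rw [hv0, hp0]; ring
    · show v 1 + (1 - lam) * p 1 = x 1
      rw [hv1, hp1]; ring
    · show v 2 + (1 - lam) * p 2 = x 2
      rw [hv2, hp2, zero_add, hs, hlam]
      rcases le_or_gt 0 (x 2) with h | h
      · rw [if_pos h, abs_of_nonneg h]
        field_simp
        ring
      · rw [if_neg (not_le.mpr h), abs_of_neg h]
        field_simp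
        ring
  have hbmem : b ∈ Metric.closedBall (0:E3) r ∪
      {EuclideanSpace.single 2 (d / 2), EuclideanSpace.single 2 (-(d / 2))} :=
    Set.mem_union_left _ (mem_closedBall_zero_iff.mpr hnb)
  have hpmem : p ∈ Metric.closedBall (0:E3) r ∪
      {EuclideanSpace.single 2 (d / 2), EuclideanSpace.single 2 (-(d / 2))} := by
    apply Set.mem_union_right
    rw [hp, hs]
    rcases le_or_gt 0 (x 2) with h | h
    · rw [if_pos h]; exact Set.mem_insert _ _
    · rw [if_neg (not_le.mpr h)]; exact Set.mem_insert_of_mem _ rfl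
  exact segment_subset_convexHull hbmem hpmem
    ⟨lam, 1 - lam, hlam_pos.le, by linarith, by ring, hcombo⟩

lemma hull_subset_coneC (r d R : ℝ) (hr : 0 < r) (hd : 0 < d) (hR : 0 < R)
    (hkey : r^2 * (1 + (2*R/d)^2) ≤ R^2) :
    sHull r d ⊆ coneC (2*R/d) R := by
  apply convexHull_min _ (convex_coneC _ _ (by positivity))
  apply Set.union_subset
  · intro x hx
    simp only [coneC, Set.mem_setOf_eq]
    set A := Real.sqrt ((x 0)^2 + (x 1)^2) with hA
    have hA0 : 0 ≤ A := Real.sqrt_nonneg _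
    have hAsq : A^2 = (x 0)^2 + (x 1)^2 := Real.sq_sqrt (by positivity)
    have hxr : (x 0)^2 + (x 1)^2 + (x 2)^2 ≤ r^2 := by
      have h := mem_closedBall_zero_iff.mp hx
      rw [norm_E3] at h
      nlinarith [Real.sq_sqrt (show (0:ℝ) ≤ (x 0)^2 + (x 1)^2 + (x 2)^2 by positivity),
        Real.sqrt_nonneg ((x 0)^2 + (x 1)^2 + (x 2)^2)]
    set c := 2*R/d with hc
    have hc0 : 0 < c := by positivity
    have hsq : (A + c * |x 2|)^2 ≤ R^2 := by
      nlinarith [sq_nonneg (|x 2| - c*A), sq_abs (x 2), abs_nonneg (x 2)]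
    nlinarith [abs_nonneg (x 2)]
  · intro x hx
    simp only [Set.mem_insert_iff, Set.mem_singleton_iff] at hx
    have habs : ∀ t : ℝ, x = EuclideanSpace.single 2 t → |t| = d/2 →
        x ∈ coneC (2*R/d) R := by
      intro t hxt ht
      simp only [coneC, Set.mem_setOf_eq, hxt, EuclideanSpace.single_apply]
      norm_num
      rw [ht]
      rw [show (2*R/d) * (d/2) = R * (d/d) by ring, div_self hd.ne', mul_one]
      simp [Real.sqrt_zero]
    rcases hx with h | h
    · exact habs (d/2) h (by rw [abs_of_pos (by positivity)])
    · exact habs (-(d/2)) h (by rw [abs_neg, abs_of_pos (by positivity)])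

lemma hull_subset_cyl (r d : ℝ) (hr : 0 < r) :
    sHull r d ⊆ {x : E3 | Real.sqrt ((x 0)^2 + (x 1)^2) ≤ r} := by
  have hconv := convex_coneC 0 r le_rfl
  have heq : coneC 0 r = {x : E3 | Real.sqrt ((x 0)^2 + (x 1)^2) ≤ r} := by
    ext x; simp [coneC]
  rw [← heq]
  apply convexHull_min _ hconv
  apply Set.union_subset
  · intro x hx
    simp only [coneC, Set.mem_setOf_eq, zero_mul, add_zero]
    have h := mem_closedBall_zero_iff.mp hx
    rw [norm_E3] at h
    calc Real.sqrt ((x 0)^2 + (x 1)^2) ≤ Real.sqrt ((x 0)^2 + (x 1)^2 + (x 2)^2) :=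
          Real.sqrt_le_sqrt (by nlinarith [sq_nonneg (x 2)])
      _ ≤ r := h
  · intro x hx
    simp only [Set.mem_insert_iff, Set.mem_singleton_iff] at hx
    rcases hx with h | h <;>
      · subst h
        simp only [coneC, Set.mem_setOf_eq, zero_mul, add_zero, EuclideanSpace.single_apply]
        norm_num
        rw [if_neg (by decide), if_neg (by decide)]
        simp [hr.le]

lemma spindle_eq (r d : ℝ) : spindle r d = interior (sHull r d) := rfl

lemma coneO_subset_spindle (r d : ℝ) (hr : 0 < r) (hd : 0 < d) :
    coneO (2*r/d) r ⊆ spindle r d := by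
  rw [spindle_eq]
  exact interior_maximal (coneO_subset_hull r d hr hd) (isOpen_coneO _ _)

lemma single_mem_spindle (r d : ℝ) (hr : 0 < r) (hd : 0 < d) (t : ℝ) (ht : |t| < d/2) :
    EuclideanSpace.single 2 t ∈ spindle r d := by
  apply coneO_subset_spindle r d hr hd
  simp only [coneO, Set.mem_setOf_eq, EuclideanSpace.single_apply]
  rw [if_neg (by decide), if_neg (by decide), if_pos trivial]
  have h1 : Real.sqrt (0^2 + 0^2) = 0 := by norm_num
  rw [h1, zero_add]
  rw [div_mul_eq_mul_div, div_lt_iff₀ hd]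
  nlinarith

lemma inradius_spindle (r d : ℝ) (hr : 0 < r) : inradius (spindle r d) = r := by
  have hcyl : spindle r d ⊆ {x : E3 | Real.sqrt ((x 0)^2 + (x 1)^2) ≤ r} :=
    interior_subset.trans (hull_subset_cyl r d hr)
  have hub : ∀ ρ ∈ {ρ : ℝ | 0 < ρ ∧ ∃ z, Metric.ball z ρ ⊆ spindle r d}, ρ ≤ r := by
    rintro ρ ⟨hρ, z, hball⟩
    by_contra hlt
    push_neg at hlt
    set t := (r + ρ)/2 with htdef
    have ht1 : r < t := by rw [htdef]; linarith
    have ht2 : t < ρ := by rw [htdef]; linarith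
    have htpos : 0 < t := lt_trans hr ht1
    have hmem : ∀ s : ℝ, |s| < ρ → z + EuclideanSpace.single 0 s ∈ Metric.ball z ρ := by
      intro s hsρ
      rw [Metric.mem_ball, dist_self_add_left, EuclideanSpace.norm_single, Real.norm_eq_abs]
      exact hsρ
    have habs : ∀ s : ℝ, |s| < ρ → |z 0 + s| ≤ r := by
      intro s hsρ
      have hk := hcyl (hball (hmem s hsρ))
      simp only [Set.mem_setOf_eq] at hk
      set w : E3 := z + EuclideanSpace.single (0 : Fin 3) s with hw
      have hco : w 0 = z 0 + s := by
        rw [hw, PiLp.add_apply, EuclideanSpace.single_apply, if_pos rfl]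
      rw [hco] at hk
      calc |z 0 + s| = Real.sqrt ((z 0 + s)^2) := (Real.sqrt_sq_eq_abs _).symm
        _ ≤ Real.sqrt ((z 0 + s)^2 + (w 1)^2) :=
            Real.sqrt_le_sqrt (by nlinarith [sq_nonneg (w 1)])
        _ ≤ r := hk
    have h1 := habs t (by rw [abs_of_pos htpos]; exact ht2)
    have h2 := habs (-t) (by rw [abs_neg, abs_of_pos htpos]; exact ht2)
    rw [abs_le] at h1 h2
    linarith [h1.2, h2.1]
  apply le_antisymm
  · exact Real.sSup_le hub hr.le
  · apply le_csSup ⟨r, hub⟩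
    refine ⟨hr, 0, ?_⟩
    rw [← interior_closedBall (0:E3) hr.ne']
    exact interior_mono ((Set.subset_union_left).trans (subset_convexHull ℝ _))

lemma isBounded_hull (r d : ℝ) : Bornology.IsBounded (sHull r d) := by
  rw [sHull, isBounded_convexHull]
  exact Metric.isBounded_closedBall.union
    ((Bornology.isBounded_singleton).insert _)

lemma diam_spindle (r d : ℝ) (hr : 0 < r) (hd : 2*r ≤ d) :
    Metric.diam (spindle r d) = d := by
  have hd0 : 0 < d := lt_of_lt_of_le (by linarith) hd
  apply le_antisymm
  · calc Metric.diam (spindle r d) ≤ Metric.diam (sHull r d) :=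
        Metric.diam_mono interior_subset (isBounded_hull r d)
      _ = Metric.diam (Metric.closedBall (0:E3) r ∪
          {EuclideanSpace.single 2 (d / 2), EuclideanSpace.single 2 (-(d / 2))}) :=
        convexHull_diam _
      _ ≤ d := by
        apply Metric.diam_le_of_forall_dist_le hd0.le
        have hpole : ∀ s : ℝ, |s| ≤ d/2 → ‖(EuclideanSpace.single (2:Fin 3) s : E3)‖ ≤ d/2 := by
          intro s hs
          rw [EuclideanSpace.norm_single, Real.norm_eq_abs]
          exact hs
        have habs : |d/2| ≤ d/2 := by rw [abs_of_pos (by positivity)]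
        have habs' : |-(d/2)| ≤ d/2 := by rw [abs_neg, abs_of_pos (by positivity)]
        have htri : ∀ x y : E3, dist x y ≤ ‖x‖ + ‖y‖ := by
          intro x y
          calc dist x y ≤ dist x 0 + dist 0 y := dist_triangle _ _ _
            _ = ‖x‖ + ‖y‖ := by rw [dist_zero_right, dist_zero_left]
        have hpnorm : ∀ y : E3, y ∈ ({EuclideanSpace.single 2 (d / 2),
            EuclideanSpace.single 2 (-(d / 2))} : Set E3) → ‖y‖ ≤ d/2 := by
          intro y hy
          simp only [Set.mem_insert_iff, Set.mem_singleton_iff] at hy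
          rcases hy with h | h <;> subst h
          · exact hpole _ habs
          · exact hpole _ habs'
        rintro x (hx | hx) y (hy | hy)
        · have h1 := mem_closedBall_zero_iff.mp hx
          have h2 := mem_closedBall_zero_iff.mp hy
          calc dist x y ≤ ‖x‖ + ‖y‖ := htri x y
            _ ≤ d := by linarith
        · have h1 := mem_closedBall_zero_iff.mp hx
          have h2 := hpnorm y hy
          calc dist x y ≤ ‖x‖ + ‖y‖ := htri x y
            _ ≤ d := by linarith
        · have h1 := hpnorm x hx
          have h2 := mem_closedBall_zero_iff.mp hy
          calc dist x y ≤ ‖x‖ + ‖y‖ := htri x y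
            _ ≤ d := by linarith
        · have h1 := hpnorm x hx
          have h2 := hpnorm y hy
          calc dist x y ≤ ‖x‖ + ‖y‖ := htri x y
            _ ≤ d := by linarith
  · apply le_of_forall_lt
    intro c hc
    rcases lt_or_ge c 0 with h | h
    · exact h.trans_le Metric.diam_nonneg
    · set t := (c + d)/4 with htdef
      have h2t : c < 2*t := by rw [htdef]; linarith
      have htd : 2*t < d := by rw [htdef]; linarith
      have htpos : 0 < t := by rw [htdef]; linarith
      have hm1 := single_mem_spindle r d hr hd0 t (by rw [abs_of_pos htpos]; linarith)
      have hm2 := single_mem_spindle r d hr hd0 (-t) (by rw [abs_neg, abs_of_pos htpos]; linarith)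
      have hdist : dist (EuclideanSpace.single (2:Fin 3) t) (EuclideanSpace.single 2 (-t)) = 2*t := by
        rw [EuclideanSpace.dist_single_same, Real.dist_eq, sub_neg_eq_add, abs_of_pos (by linarith)]
        ring
      have := Metric.dist_le_diam_of_mem ((isBounded_hull r d).subset interior_subset) hm1 hm2
      rw [hdist, ← spindle_eq r d] at this
      linarith


/-- The constant `π/3` in `|Ω| ≥ (π/3) r_in(Ω)² diam(Ω)` is sharp: for fixed `r > 0`,
`|Ω_d| / (r_in(Ω_d)² · diam(Ω_d)) → π/3` as `d → ∞`. -/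
theorem spindle_ratio_tendsto_pi_div_three (r : ℝ) (hr : 0 < r) :
    Tendsto (fun d : ℝ =>
        (volume (spindle r d)).toReal /
          (inradius (spindle r d) ^ 2 * Metric.diam (spindle r d)))
      atTop (nhds (Real.pi / 3)) := by
  have hbound : ∀ d : ℝ, 2*r + 1 ≤ d →
      π/3 ≤ (volume (spindle r d)).toReal /
          (inradius (spindle r d) ^ 2 * Metric.diam (spindle r d)) ∧
      (volume (spindle r d)).toReal /
          (inradius (spindle r d) ^ 2 * Metric.diam (spindle r d))
        ≤ π/3 * (d^2 / (d^2 - 4*r^2)) := by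
    intro d hd
    have hd0 : 0 < d := by linarith
    have hd2r : 2*r < d := by linarith
    have hX : 0 < d^2 - 4*r^2 := by nlinarith
    set R := r*d / Real.sqrt (d^2 - 4*r^2) with hRdef
    have hsX : 0 < Real.sqrt (d^2 - 4*r^2) := Real.sqrt_pos.mpr hX
    have hR : 0 < R := by rw [hRdef]; positivity
    have hRsq : R^2 = r^2 * d^2 / (d^2 - 4*r^2) := by
      rw [hRdef, div_pow, mul_pow, Real.sq_sqrt hX.le]
    have hkey : r^2 * (1 + (2*R/d)^2) ≤ R^2 := by
      apply le_of_eq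
      rw [hRsq, div_pow, mul_pow, hRsq]
      have hX' : d^2 - r^2*4 ≠ 0 := (by linarith : 0 < d^2 - r^2*4).ne'
      field_simp
      ring
    -- volume lower bound
    have hlow : ENNReal.ofReal (π*r^2*d/3) ≤ volume (spindle r d) := by
      have h1 := volume_coneO (2*r/d) r (by positivity) hr.le
      have h2 : 2 * π * r ^ 3 / (3 * (2*r/d)) = π*r^2*d/3 := by
        field_simp
      rw [h2] at h1
      rw [← h1]
      exact measure_mono (coneO_subset_spindle r d hr hd0)
    -- volume upper bound
    have hupp : volume (spindle r d) ≤ ENNReal.ofReal (π*r^2*d^3/(3*(d^2 - 4*r^2))) := by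
      have h1 := volume_coneC (2*R/d) R (by positivity) hR.le
      have h2 : 2 * π * R ^ 3 / (3 * (2*R/d)) = π*R^2*d/3 := by
        field_simp
      have h3 : π*R^2*d/3 = π*r^2*d^3/(3*(d^2 - 4*r^2)) := by
        rw [hRsq]
        field_simp
      rw [h2, h3] at h1
      rw [← h1]
      refine measure_mono (subset_trans ?_ (hull_subset_coneC r d R hr hd0 hR hkey))
      rw [spindle_eq]
      exact interior_subset
    have hfin : volume (spindle r d) ≠ ⊤ :=
      ne_top_of_le_ne_top ENNReal.ofReal_ne_top hupp
    have hlowR : π*r^2*d/3 ≤ (volume (spindle r d)).toReal := by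
      have := ENNReal.toReal_mono hfin hlow
      rwa [ENNReal.toReal_ofReal (by positivity)] at this
    have huppR : (volume (spindle r d)).toReal ≤ π*r^2*d^3/(3*(d^2 - 4*r^2)) := by
      have := ENNReal.toReal_mono ENNReal.ofReal_ne_top hupp
      rwa [ENNReal.toReal_ofReal (by positivity)] at this
    rw [inradius_spindle r d hr, diam_spindle r d hr hd2r.le]
    constructor
    · rw [le_div_iff₀ (by positivity)]
      have : π/3 * (r^2*d) = π*r^2*d/3 := by ring
      linarith
    · rw [div_le_iff₀ (by positivity)]
      have : π/3 * (d^2 / (d^2 - 4*r^2)) * (r^2*d) = π*r^2*d^3/(3*(d^2 - 4*r^2)) := by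
        field_simp
      linarith
  have hXtop : Tendsto (fun d : ℝ => d^2 - 4*r^2) atTop atTop := by
    have h1 : Tendsto (fun d : ℝ => d^2) atTop atTop :=
      tendsto_pow_atTop (by norm_num)
    simpa [sub_eq_add_neg] using tendsto_atTop_add_const_right atTop (-(4*r^2)) h1
  have h0 : Tendsto (fun d : ℝ => 4*r^2 * (d^2 - 4*r^2)⁻¹) atTop (nhds 0) := by
    simpa using (hXtop.inv_tendsto_atTop).const_mul (4*r^2)
  have hg : Tendsto (fun d : ℝ => π/3 * (d^2 / (d^2 - 4*r^2))) atTop (nhds (π/3)) := by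
    have h1 : Tendsto (fun d : ℝ => 1 + 4*r^2 * (d^2 - 4*r^2)⁻¹) atTop (nhds 1) := by
      simpa using tendsto_const_nhds.add h0
    have h2 : Tendsto (fun d : ℝ => π/3 * (1 + 4*r^2 * (d^2 - 4*r^2)⁻¹)) atTop
        (nhds (π/3)) := by
      simpa using tendsto_const_nhds.mul h1
    apply h2.congr'
    filter_upwards [eventually_ge_atTop (2*r+1)] with d hd
    have hd0 : 0 < d := by linarith
    have hX : 0 < d^2 - 4*r^2 := by nlinarith
    field_simp
    ring
  apply tendsto_of_tendsto_of_tendsto_of_le_of_le' tendsto_const_nhds hg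
  · filter_upwards [eventually_ge_atTop (2*r+1)] with d hd
    exact (hbound d hd).1
  · filter_upwards [eventually_ge_atTop (2*r+1)] with d hd
    exact (hbound d hd).2
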